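/- arXiv:1309.3982 — 3 statements merged into one kernel-verified Lean document; each statement's English description precedes it below -/
import Mathlib

section
/- For an integer k > 1 and an indeterminate (or complex number) X with X ≠ 1 and X^k ≠ 1, one has 1/(X-1) - k/(X^k-1) = Σ_{ξ ∈ μ_k, ξ ≠ 1} 1/(1 - ξX), where μ_k denotes the group of k-th roots of unity in ℂ. -/
open Polynomial Finset

lemma roots_image (k : ℕ) (hk : 0 < k) :
    ∃ ζ : ℂ, IsPrimitiveRoot ζ k ∧
      nthRootsFinset k (1 : ℂ) = (Finset.range k).image (ζ ^ ·) := by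
  have hζ := Complex.isPrimitiveRoot_exp k hk.ne'
  refine ⟨_, hζ, ?_⟩
  classical
  rw [nthRootsFinset_def, hζ.nthRoots_eq (one_pow k)]
  ext x
  simp [Finset.mem_image, Multiset.mem_map, Multiset.mem_range]

lemma sum_pow_mid (k m : ℕ) (hm : 0 < m) (hmk : m < k) :
    ∑ η ∈ nthRootsFinset k (1 : ℂ), η ^ m = 0 := by
  obtain ⟨ζ, hζ, hS⟩ := roots_image k (hm.trans hmk)
  rw [hS, Finset.sum_image (fun i hi j hj => hζ.injOn_pow (by simpa using hi) (by simpa using hj))]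
  have h1 : (ζ ^ m) ≠ 1 := hζ.pow_ne_one_of_pos_of_lt hm.ne' hmk
  have := geom_sum_mul (ζ ^ m) k
  have h2 : (ζ ^ m) ^ k - 1 = 0 := by
    rw [← pow_mul, mul_comm, pow_mul, hζ.pow_eq_one, one_pow, sub_self]
  have h3 : (∑ i ∈ range k, (ζ ^ m) ^ i) = 0 :=
    (mul_eq_zero.mp (by rw [this, h2])).resolve_right (sub_ne_zero.mpr h1)
  calc ∑ i ∈ range k, (ζ ^ i) ^ m = ∑ i ∈ range k, (ζ ^ m) ^ i := by
        simp [← pow_mul, mul_comm]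
    _ = 0 := h3

lemma key_sum (k : ℕ) (hk : 1 < k) (X : ℂ) (hXk : X ^ k ≠ 1) :
    ∑ η ∈ nthRootsFinset k (1 : ℂ), η / (X - η) = (k : ℂ) / (X ^ k - 1) := by
  have hk0 : 0 < k := by omega
  have hXk1 : X ^ k - 1 ≠ 0 := sub_ne_zero.mpr hXk
  have hXη : ∀ η ∈ nthRootsFinset k (1 : ℂ), X - η ≠ 0 := by
    intro η hη
    rw [mem_nthRootsFinset hk0] at hη
    intro h
    exact hXk (by rw [sub_eq_zero] at h; rw [h, hη])
  have term : ∀ η ∈ nthRootsFinset k (1 : ℂ),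
      η / (X - η) = (∑ i ∈ range k, X ^ i * η ^ (k - i)) / (X ^ k - 1) := by
    intro η hη
    have hη1 : η ^ k = 1 := (mem_nthRootsFinset hk0 _).mp hη
    rw [div_eq_div_iff (hXη η hη) hXk1]
    have hg := geom_sum₂_mul X η k
    have : (∑ i ∈ range k, X ^ i * η ^ (k - i)) = η * ∑ i ∈ range k, X ^ i * η ^ (k - 1 - i) := by
      rw [Finset.mul_sum]
      refine Finset.sum_congr rfl fun i hi => ?_
      have : k - i = (k - 1 - i) + 1 := by
        have := mem_range.mp hi; omega
      rw [this, pow_succ]; ring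
    rw [this, mul_assoc, hg, hη1]
  rw [Finset.sum_congr rfl term, ← Finset.sum_div]
  congr 1
  rw [Finset.sum_comm]
  have : ∀ i ∈ range k, (∑ η ∈ nthRootsFinset k (1 : ℂ), X ^ i * η ^ (k - i)) =
      if i = 0 then (k : ℂ) else 0 := by
    intro i hi
    have hik := mem_range.mp hi
    rw [← Finset.mul_sum]
    rcases Nat.eq_zero_or_pos i with rfl | hipos
    · simp only [if_pos rfl, pow_zero, one_mul, Nat.sub_zero]
      have : ∀ η ∈ nthRootsFinset k (1 : ℂ), η ^ k = (1 : ℂ) :=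
        fun η hη => (mem_nthRootsFinset hk0 _).mp hη
      rw [Finset.sum_congr rfl this, Finset.sum_const]
      obtain ⟨ζ, hζ, -⟩ := roots_image k hk0
      rw [hζ.card_nthRootsFinset]
      simp
    · rw [if_neg hipos.ne', sum_pow_mid k (k - i) (by omega) (by omega), mul_zero]
  rw [Finset.sum_congr rfl this, Finset.sum_ite_eq' (range k) 0, if_pos (mem_range.mpr hk0)]

/-- For an integer `k > 1` and `X : ℂ` with `X ≠ 1`, `X^k ≠ 1`:
`1/(X-1) - k/(X^k-1) = ∑_{ξ ∈ μ_k, ξ ≠ 1} 1/(1 - ξX)`. -/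
theorem statement0 (k : ℕ) (hk : 1 < k) (X : ℂ) (hX : X ≠ 1) (hXk : X ^ k ≠ 1) :
    1 / (X - 1) - (k : ℂ) / (X ^ k - 1) =
      ∑ ξ ∈ (nthRootsFinset k (1 : ℂ)).erase 1, 1 / (1 - ξ * X) := by
  classical
  have hk0 : 0 < k := by omega
  have hXη : ∀ η ∈ nthRootsFinset k (1 : ℂ), X - η ≠ 0 := by
    intro η hη
    rw [mem_nthRootsFinset hk0] at hη
    intro h
    exact hXk (by rw [sub_eq_zero] at h; rw [h, hη])
  -- reindex ξ ↦ ξ⁻¹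
  have hinv : ∀ ξ ∈ (nthRootsFinset k (1 : ℂ)).erase 1, ξ⁻¹ ∈ (nthRootsFinset k (1 : ℂ)).erase 1 := by
    intro ξ hξ
    obtain ⟨hne, hmem⟩ := Finset.mem_erase.mp hξ
    have hξk : ξ ^ k = 1 := (mem_nthRootsFinset hk0 _).mp hmem
    refine Finset.mem_erase.mpr ⟨fun h => hne (by rw [inv_eq_one] at h; exact h), ?_⟩
    rw [mem_nthRootsFinset hk0, inv_pow, hξk, inv_one]
  have hre : ∑ ξ ∈ (nthRootsFinset k (1 : ℂ)).erase 1, 1 / (1 - ξ * X) =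
      ∑ η ∈ (nthRootsFinset k (1 : ℂ)).erase 1, 1 / (1 - η⁻¹ * X) := by
    refine Finset.sum_nbij' (fun ξ => ξ⁻¹) (fun η => η⁻¹) hinv hinv
      (fun a _ => inv_inv a) (fun a _ => inv_inv a) ?_
    intro ξ hξ
    rw [inv_inv]
  rw [hre]
  have step : ∀ η ∈ (nthRootsFinset k (1 : ℂ)).erase 1, 1 / (1 - η⁻¹ * X) = -(η / (X - η)) := by
    intro η hη
    have hmem := (Finset.mem_erase.mp hη).2
    have hη0 : η ≠ 0 := ne_zero_of_mem_nthRootsFinset one_ne_zero hmem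
    have hden : X - η ≠ 0 := hXη η hmem
    have hne : 1 - η⁻¹ * X ≠ 0 := by
      intro h
      apply hden
      rw [sub_eq_zero] at h ⊢
      field_simp at h
      exact h.symm
    have hden' : η - X ≠ 0 := sub_ne_zero.mpr (sub_ne_zero.mp hden).symm
    field_simp
    ring
  rw [Finset.sum_congr rfl step, Finset.sum_neg_distrib]
  have hsplit : ∑ η ∈ (nthRootsFinset k (1 : ℂ)).erase 1, η / (X - η) =
      (∑ η ∈ nthRootsFinset k (1 : ℂ), η / (X - η)) - 1 / (X - 1) := by
    rw [← Finset.sum_erase_add _ _ (one_mem_nthRootsFinset hk0)]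
    ring
  rw [hsplit, key_sum k hk X hXk]
  ring
end

section
/- Let c be an integer greater than 1. For every nonnegative integer n, (1 - c^{n+1}) · B_{n+1}/(n+1) = Σ_{ξ^c = 1, ξ ≠ 1} 𝔅_n(ξ), where the sum runs over nontrivial complex c-th roots of unity. -/
open Polynomial PowerSeries

lemma inv_mem_nthRF {c : ℕ} (hc : 0 < c) {ξ : ℂ} (h : ξ ∈ nthRootsFinset c (1 : ℂ)) :
    ξ⁻¹ ∈ nthRootsFinset c (1 : ℂ) := by
  rw [mem_nthRootsFinset hc] at h ⊢
  rw [inv_pow, h, inv_one]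

lemma xPowProd {c : ℕ} (hc : 0 < c) :
    (Polynomial.X : Polynomial ℂ) ^ c - 1 = ∏ ζ ∈ nthRootsFinset c (1 : ℂ), (Polynomial.X - Polynomial.C ζ) :=
  Polynomial.X_pow_sub_one_eq_prod hc (Complex.isPrimitiveRoot_exp c hc.ne')

lemma prodNegRoots {c : ℕ} (hc : 0 < c) :
    ∏ ζ ∈ nthRootsFinset c (1 : ℂ), (-ζ) = -1 := by
  have h := congrArg (Polynomial.eval 0) (xPowProd hc)
  simpa [eval_prod, zero_pow hc.ne'] using h.symm

lemma prodOneSub {c : ℕ} (hc : 0 < c) :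
    ∏ ξ ∈ nthRootsFinset c (1 : ℂ), (1 - Polynomial.C ξ * Polynomial.X) = 1 - Polynomial.X ^ c := by
  have h1 : ∀ ξ ∈ nthRootsFinset c (1 : ℂ),
      (1 - Polynomial.C ξ * Polynomial.X) = Polynomial.C (-ξ) * (Polynomial.X - Polynomial.C ξ⁻¹) := by
    intro ξ hξ
    have hξ0 : ξ ≠ 0 := ne_zero_of_mem_nthRootsFinset one_ne_zero hξ
    rw [map_neg, neg_mul, mul_sub, ← Polynomial.C_mul, mul_inv_cancel₀ hξ0, Polynomial.C_1]
    ring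
  rw [Finset.prod_congr rfl h1, Finset.prod_mul_distrib, ← map_prod, prodNegRoots hc,
    show ∏ ξ ∈ nthRootsFinset c (1 : ℂ), (Polynomial.X - Polynomial.C ξ⁻¹)
        = ∏ ξ ∈ nthRootsFinset c (1 : ℂ), (Polynomial.X - Polynomial.C ξ) from
      Finset.prod_nbij' (fun ξ => ξ⁻¹) (fun ξ => ξ⁻¹)
        (fun ξ h => inv_mem_nthRF hc h) (fun ξ h => inv_mem_nthRF hc h)
        (fun ξ h => inv_inv ξ) (fun ξ h => inv_inv ξ) (fun ξ h => rfl),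
    ← xPowProd hc, map_neg, Polynomial.C_1]
  ring

lemma polyDerivFinsetProd {ι : Type*} [DecidableEq ι] (s : Finset ι) (f : ι → Polynomial ℂ) :
    derivative (∏ i ∈ s, f i) = ∑ i ∈ s, (∏ j ∈ s.erase i, f j) * derivative (f i) := by
  rw [Finset.prod, Polynomial.derivative_prod, Finset.sum]
  exact congrArg Multiset.sum (Multiset.map_congr rfl fun i hi => by
    rw [Finset.prod, Finset.erase_val])

lemma sumCMulProd {c : ℕ} (hc : 0 < c) :
    ∑ ξ ∈ nthRootsFinset c (1 : ℂ),
      (∏ η ∈ (nthRootsFinset c (1 : ℂ)).erase ξ, (1 - Polynomial.C η * Polynomial.X)) * Polynomial.C ξ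
      = Polynomial.C (c : ℂ) * Polynomial.X ^ (c - 1) := by
  have h := polyDerivFinsetProd (nthRootsFinset c (1 : ℂ)) (fun ξ => 1 - Polynomial.C ξ * Polynomial.X)
  rw [prodOneSub hc] at h
  simp only [Polynomial.derivative_sub, Polynomial.derivative_one, Polynomial.derivative_X_pow, Polynomial.derivative_mul, Polynomial.derivative_C,
    Polynomial.derivative_X, zero_mul, zero_add, mul_one, zero_sub] at h
  have h2 : ∀ ξ ∈ nthRootsFinset c (1 : ℂ),
      (∏ η ∈ (nthRootsFinset c (1 : ℂ)).erase ξ, (1 - Polynomial.C η * Polynomial.X)) * -Polynomial.C ξ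
        = -((∏ η ∈ (nthRootsFinset c (1 : ℂ)).erase ξ, (1 - Polynomial.C η * Polynomial.X)) * Polynomial.C ξ) := by
    intro ξ _; ring
  rw [Finset.sum_congr rfl h2, Finset.sum_neg_distrib] at h
  · exact (neg_injective h).symm

lemma sumProdErase {c : ℕ} (hc : 0 < c) :
    ∑ ξ ∈ nthRootsFinset c (1 : ℂ),
      ∏ η ∈ (nthRootsFinset c (1 : ℂ)).erase ξ, (1 - Polynomial.C η * Polynomial.X)
      = Polynomial.C (c : ℂ) := by
  have hcard : (nthRootsFinset c (1 : ℂ)).card = c :=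
    (Complex.isPrimitiveRoot_exp c hc.ne').card_nthRootsFinset
  have key : ∀ ξ ∈ nthRootsFinset c (1 : ℂ),
      ∏ η ∈ (nthRootsFinset c (1 : ℂ)).erase ξ, (1 - Polynomial.C η * Polynomial.X)
        = (1 - Polynomial.X ^ c)
          + ((∏ η ∈ (nthRootsFinset c (1 : ℂ)).erase ξ, (1 - Polynomial.C η * Polynomial.X))
              * Polynomial.C ξ) * Polynomial.X := by
    intro ξ hξ
    have h := Finset.mul_prod_erase _ (fun η => 1 - Polynomial.C η * Polynomial.X) hξ
    rw [prodOneSub hc] at h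
    set Q := ∏ η ∈ (nthRootsFinset c (1 : ℂ)).erase ξ, (1 - Polynomial.C η * Polynomial.X)
    -- h : (1 - C ξ * X) * Q = 1 - X ^ c
    linear_combination h
  rw [Finset.sum_congr rfl key, Finset.sum_add_distrib, Finset.sum_const, hcard,
    ← Finset.sum_mul, sumCMulProd hc]
  have hX : Polynomial.C (c:ℂ) * Polynomial.X ^ (c-1) * Polynomial.X
      = Polynomial.C (c:ℂ) * Polynomial.X ^ c := by
    rw [mul_assoc, ← pow_succ, Nat.sub_add_cancel hc]
  rw [hX, nsmul_eq_mul]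
  rw [← Polynomial.C_eq_natCast]
  ring

/-- The twisted Bernoulli numbers `𝔅_n(ξ)` (for `ξ ≠ 1`), defined by the expansion
`1/(1 - ξ e^t) = Σ_{n≥0} 𝔅_n(ξ) t^n/n!`. -/
noncomputable def twistedBernoulli (ξ : ℂ) (n : ℕ) : ℂ :=
  (n.factorial : ℂ) * PowerSeries.coeff n (1 - PowerSeries.C ξ * PowerSeries.exp ℂ)⁻¹

/-- For an integer `c > 1` and `n ≥ 0`:
`(1 - c^{n+1}) B_{n+1}/(n+1) = Σ_{ξ^c = 1, ξ ≠ 1} 𝔅_n(ξ)`. -/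
theorem statement1 (c : ℕ) (hc : 1 < c) (n : ℕ) :
    (1 - (c : ℂ) ^ (n + 1)) * ((bernoulli (n + 1) : ℚ) : ℂ) / (n + 1) =
      ∑ ξ ∈ (nthRootsFinset c (1 : ℂ)).erase 1, twistedBernoulli ξ n := by
  have hc0 : 0 < c := Nat.lt_of_lt_of_le Nat.one_pos hc.le
  set s := nthRootsFinset c (1 : ℂ) with hs
  set E := PowerSeries.exp ℂ with hE
  set F : ℂ → PowerSeries ℂ := fun ξ => 1 - PowerSeries.C ξ * E with hF
  have hφ : ∀ η : ℂ, Polynomial.aeval E (1 - Polynomial.C η * Polynomial.X) = F η := by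
    intro η
    rw [map_sub, map_one, map_mul, Polynomial.aeval_C, Polynomial.aeval_X]
    rfl
  -- transfer polynomial identities
  have hA : ∏ ξ ∈ s, F ξ = 1 - E ^ c := by
    have h := congrArg (Polynomial.aeval E) (prodOneSub (c := c) hc0)
    rw [map_prod, map_sub, map_one, map_pow, Polynomial.aeval_X] at h
    rw [← Finset.prod_congr rfl fun ξ _ => hφ ξ]
    exact h
  have hB : ∑ ξ ∈ s, ∏ η ∈ s.erase ξ, F η = PowerSeries.C (c : ℂ) := by
    have h := congrArg (Polynomial.aeval E) (sumProdErase (c := c) hc0)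
    simp only [map_sum, map_prod, Polynomial.aeval_C] at h
    rw [← Finset.sum_congr rfl fun ξ _ => Finset.prod_congr rfl fun η _ => hφ η]
    exact h
  set P : PowerSeries ℂ := 1 - E ^ c with hP
  set Q : PowerSeries ℂ := ∏ η ∈ s.erase 1, F η with hQ
  set G : PowerSeries ℂ := ∑ ξ ∈ s.erase 1, (F ξ)⁻¹ with hG
  set B : PowerSeries ℂ := bernoulliPowerSeries ℂ with hBdef
  set Bc : PowerSeries ℂ := rescale (c : ℂ) B with hBc
  have h1mem : (1 : ℂ) ∈ s := one_mem_nthRootsFinset hc0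
  have hinv : ∀ ξ ∈ s.erase 1, F ξ * (F ξ)⁻¹ = 1 := by
    intro ξ hξ
    apply PowerSeries.mul_inv_cancel
    have : PowerSeries.constantCoeff (F ξ) = 1 - ξ := by
      simp [F, hE, PowerSeries.constantCoeff_exp]
    rw [this]
    rw [sub_ne_zero]
    exact fun h => (Finset.mem_erase.mp hξ).1 h.symm
  -- P * G
  have h1 : P * G = PowerSeries.C (c : ℂ) - Q := by
    rw [hG, Finset.mul_sum]
    have hterm : ∀ ξ ∈ s.erase 1, P * (F ξ)⁻¹ = ∏ η ∈ s.erase ξ, F η := by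
      intro ξ hξ
      rw [← hA, ← Finset.mul_prod_erase _ _ (Finset.mem_of_mem_erase hξ),
        mul_comm (F ξ), mul_assoc, hinv ξ hξ, mul_one]
    rw [Finset.sum_congr rfl hterm, ← hB, ← Finset.add_sum_erase _ _ h1mem]
    ring
  -- B * P
  have hBP : B * P = -(PowerSeries.X * Q) := by
    have h0 : P = (1 - E) * Q := by
      rw [← hA, ← Finset.mul_prod_erase _ _ h1mem, hQ]
      congr 1
      simp [F]
    have h1' : B * (E - 1) = PowerSeries.X := bernoulliPowerSeries_mul_exp_sub_one ℂ
    rw [h0]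
    calc B * ((1 - E) * Q) = -(B * (E - 1)) * Q := by ring
    _ = -(PowerSeries.X * Q) := by rw [h1']; ring
  -- Bc * P
  have hEc : E ^ c = rescale (c : ℂ) E := exp_pow_eq_rescale_exp c
  have hBcP : Bc * P = -(PowerSeries.C (c : ℂ) * PowerSeries.X) := by
    have h2' := congrArg (rescale (c : ℂ)) (bernoulliPowerSeries_mul_exp_sub_one ℂ)
    rw [map_mul, map_sub, map_one, rescale_X] at h2'
    rw [hP, hEc]
    calc Bc * (1 - rescale (c:ℂ) E) = -(rescale (c:ℂ) B * (rescale (c:ℂ) E - 1)) := by ring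
    _ = -(PowerSeries.C (c : ℂ) * PowerSeries.X) := by rw [← hBc]; rw [h2']
  -- cancel P
  have hP0 : P ≠ 0 := by
    intro h
    have h1' := congrArg (PowerSeries.coeff 1) h
    have hE1 : PowerSeries.coeff 1 E = 1 := by
      rw [hE, PowerSeries.coeff_exp]
      norm_num
    have hco : PowerSeries.coeff 1 P = -(c : ℂ) := by
      rw [hP, hEc]
      simp [PowerSeries.coeff_rescale, hE1]
    rw [h, map_zero] at hco
    have : (c : ℂ) ≠ 0 := Nat.cast_ne_zero.mpr hc0.ne'
    exact this (by linear_combination hco)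
  have hXG : PowerSeries.X * G = B - Bc := by
    apply mul_left_cancel₀ hP0
    calc P * (PowerSeries.X * G) = PowerSeries.X * (P * G) := by ring
    _ = PowerSeries.X * (PowerSeries.C (c : ℂ) - Q) := by rw [h1]
    _ = B * P - Bc * P := by rw [hBP, hBcP]; ring
    _ = P * (B - Bc) := by ring
  -- extract coefficients
  have hcoeff : PowerSeries.coeff n G
      = (1 - (c : ℂ) ^ (n + 1)) * algebraMap ℚ ℂ (_root_.bernoulli (n + 1) / (n + 1).factorial) := by
    have := congrArg (PowerSeries.coeff (n + 1)) hXG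
    rw [PowerSeries.coeff_succ_X_mul, map_sub] at this
    rw [this, hBc, PowerSeries.coeff_rescale, hBdef, bernoulliPowerSeries, PowerSeries.coeff_mk]
    ring
  have hsum : ∑ ξ ∈ s.erase 1, twistedBernoulli ξ n
      = (n.factorial : ℂ) * PowerSeries.coeff n G := by
    rw [hG, map_sum, Finset.mul_sum]
    rfl
  rw [hsum, hcoeff, eq_ratCast]
  have hfac : ((n + 1).factorial : ℂ) = (n + 1) * (n.factorial : ℂ) := by
    push_cast [Nat.factorial_succ]
    ring
  push_cast
  rw [hfac]
  have hn1 : ((n : ℂ) + 1) ≠ 0 := by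
    exact_mod_cast (Nat.cast_ne_zero (R := ℂ)).mpr (Nat.succ_ne_zero n)
  have hnf : (n.factorial : ℂ) ≠ 0 := Nat.cast_ne_zero.mpr n.factorial_ne_zero
  field_simp
end

section
/- For an integer c > 1 and k, l ≥ 0, the double sum over pairs of nontrivial c-th roots of unity satisfies: Σ_{ξ_1 ∈ μ_c, ξ_1≠1} Σ_{ξ_2 ∈ μ_c, ξ_2≠1} 𝔅(k, l; ξ_1, ξ_2; γ_1, γ_2) = Σ_{j=0}^{l} C(l,j) (1 - c^{k+j+1})(1 - c^{l-j+1}) · (B_{k+j+1}/(k+j+1)) · (B_{l-j+1}/(l-j+1)) · γ_1^{k+j} γ_2^{l-j}. -/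
open Polynomial

/-- The two-variable power series `e^{γ(t₁+t₂)}`: its coefficient at `t₁^a t₂^b`
is `γ^{a+b}/(a! b!)`. -/
noncomputable def expT12 (γ : ℂ) : MvPowerSeries (Fin 2) ℂ :=
  fun m => γ ^ (m 0 + m 1) / (((m 0).factorial : ℂ) * ((m 1).factorial : ℂ))

/-- The two-variable power series `e^{γ t₂}`: its coefficient at `t₁^a t₂^b`
is `γ^b/b!` if `a = 0` and `0` otherwise. -/
noncomputable def expT2 (γ : ℂ) : MvPowerSeries (Fin 2) ℂ :=
  fun m => if m 0 = 0 then γ ^ (m 1) / ((m 1).factorial : ℂ) else 0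

/-- The twisted double Bernoulli numbers `𝔅(k,l;ξ₁,ξ₂;γ₁,γ₂)`, defined by the
two-variable Taylor expansion
`(1/(1 - ξ₁ e^{γ₁(t₁+t₂)})) · (1/(1 - ξ₂ e^{γ₂ t₂}))
  = Σ_{k,l ≥ 0} 𝔅(k,l;ξ₁,ξ₂;γ₁,γ₂) t₁^k t₂^l/(k! l!)`. -/
noncomputable def doubleBernoulli (ξ₁ ξ₂ γ₁ γ₂ : ℂ) (k l : ℕ) : ℂ :=
  (k.factorial : ℂ) * (l.factorial : ℂ) *
    MvPowerSeries.coeff (R := ℂ) (Finsupp.single (0 : Fin 2) k + Finsupp.single (1 : Fin 2) l)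
      ((1 - MvPowerSeries.C (σ := Fin 2) (R := ℂ) ξ₁ * expT12 γ₁)⁻¹ *
        (1 - MvPowerSeries.C (σ := Fin 2) (R := ℂ) ξ₂ * expT2 γ₂)⁻¹)

open PowerSeries Finset

/-- The exponent vector `t₁^a t₂^b`. -/
noncomputable def fs (a b : ℕ) : Fin 2 →₀ ℕ := Finsupp.single 0 a + Finsupp.single 1 b

@[simp] lemma fs_apply0 (a b : ℕ) : fs a b 0 = a := by
  simp [fs, Finsupp.single_apply]

@[simp] lemma fs_apply1 (a b : ℕ) : fs a b 1 = b := by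
  simp [fs, Finsupp.single_apply]

lemma fin2_eq (u : Fin 2 →₀ ℕ) : u = fs (u 0) (u 1) := by
  ext i
  fin_cases i
  · simpa using rfl
  · simpa using rfl

lemma fs_add (a b a' b' : ℕ) : fs a b + fs a' b' = fs (a + a') (b + b') := by
  simp only [fs, Finsupp.single_add]
  abel

lemma fs_zero : fs 0 0 = 0 := by simp [fs]

lemma fs_eq_zero_iff (a b : ℕ) : fs a b = 0 ↔ a = 0 ∧ b = 0 := by
  constructor
  · intro h
    constructor
    · have := congrArg (fun u : Fin 2 →₀ ℕ => u 0) h; simpa using this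
    · have := congrArg (fun u : Fin 2 →₀ ℕ => u 1) h; simpa using this
  · rintro ⟨rfl, rfl⟩; exact fs_zero

lemma sum_antidiagonal_fs {M : Type*} [AddCommMonoid M] (k l : ℕ)
    (f : (Fin 2 →₀ ℕ) × (Fin 2 →₀ ℕ) → M) :
    ∑ p ∈ Finset.HasAntidiagonal.antidiagonal (fs k l), f p
      = ∑ a ∈ range (k+1), ∑ b ∈ range (l+1), f (fs a b, fs (k-a) (l-b)) := by
  rw [← Finset.sum_product']
  symm
  refine Finset.sum_nbij' (i := fun q => ((fs q.1 q.2 : Fin 2 →₀ ℕ), fs (k - q.1) (l - q.2)))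
      (j := fun p => (p.1 0, p.1 1)) ?_ ?_ ?_ ?_ ?_
  · rintro ⟨a, b⟩ hq
    simp only [Finset.mem_product, mem_range] at hq
    rw [Finset.HasAntidiagonal.mem_antidiagonal, fs_add]
    have h1 : a + (k - a) = k := by omega
    have h2 : b + (l - b) = l := by omega
    rw [h1, h2]
  · rintro ⟨u, v⟩ hp
    rw [Finset.HasAntidiagonal.mem_antidiagonal] at hp
    have h0 : u 0 + v 0 = k := by
      have := DFunLike.congr_fun hp (0 : Fin 2); simpa using this
    have h1 : u 1 + v 1 = l := by
      have := DFunLike.congr_fun hp (1 : Fin 2); simpa using this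
    simp only [Finset.mem_product, mem_range]
    omega
  · rintro ⟨a, b⟩ _
    simp
  · rintro ⟨u, v⟩ hp
    rw [Finset.HasAntidiagonal.mem_antidiagonal] at hp
    have h0 : u 0 + v 0 = k := by
      have := DFunLike.congr_fun hp (0 : Fin 2); simpa using this
    have h1 : u 1 + v 1 = l := by
      have := DFunLike.congr_fun hp (1 : Fin 2); simpa using this
    have hu : u = fs (u 0) (u 1) := fin2_eq u
    have hv : v = fs (v 0) (v 1) := fin2_eq v
    simp only [Prod.mk.injEq]
    constructor
    · exact hu.symm
    · rw [hv]
      have e0 : k - u 0 = v 0 := by omega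
      have e1 : l - u 1 = v 1 := by omega
      rw [e0, e1]
  · rintro ⟨a, b⟩ _
    rfl
/-- Underlying function of the substitution `X ↦ t₁ + t₂`. -/
noncomputable def phi12fun (f : ℂ⟦X⟧) : MvPowerSeries (Fin 2) ℂ :=
  fun m => PowerSeries.coeff (R := ℂ) (m 0 + m 1) f * ((m 0 + m 1).choose (m 0) : ℂ)

/-- Underlying function of the substitution `X ↦ t₂`. -/
noncomputable def phi2fun (f : ℂ⟦X⟧) : MvPowerSeries (Fin 2) ℂ :=
  fun m => if m 0 = 0 then PowerSeries.coeff (R := ℂ) (m 1) f else 0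

lemma phi12fun_mul (f g : ℂ⟦X⟧) : phi12fun (f * g) = phi12fun f * phi12fun g := by
  funext m
  obtain ⟨k, l, rfl⟩ : ∃ k l, m = fs k l := ⟨m 0, m 1, fin2_eq m⟩
  have hRHS : (phi12fun f * phi12fun g) (fs k l)
      = ∑ a ∈ range (k+1), ∑ b ∈ range (l+1),
          (PowerSeries.coeff (R := ℂ) (a+b) f * ((a+b).choose a : ℂ)) *
          (PowerSeries.coeff (R := ℂ) ((k-a)+(l-b)) g * (((k-a)+(l-b)).choose (k-a) : ℂ)) := by
    show MvPowerSeries.coeff (R := ℂ) (fs k l) (phi12fun f * phi12fun g) = _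
    rw [MvPowerSeries.coeff_mul, sum_antidiagonal_fs]
    refine Finset.sum_congr rfl fun a _ => Finset.sum_congr rfl fun b _ => ?_
    show phi12fun f (fs a b) * phi12fun g (fs (k - a) (l - b)) = _
    simp only [phi12fun, fs_apply0, fs_apply1]
  have hLHS : phi12fun (f * g) (fs k l)
      = ∑ p ∈ range (k+l+1),
          PowerSeries.coeff (R := ℂ) p f * PowerSeries.coeff (R := ℂ) (k+l-p) g * ((k+l).choose k : ℂ) := by
    show PowerSeries.coeff (R := ℂ) ((fs k l) 0 + (fs k l) 1) (f * g) * (((fs k l) 0 + (fs k l) 1).choose ((fs k l) 0) : ℂ) = _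
    rw [fs_apply0, fs_apply1, PowerSeries.coeff_mul,
      Finset.Nat.sum_antidiagonal_eq_sum_range_succ_mk, Finset.sum_mul]
  rw [hLHS, hRHS]
  have hV : ∀ p ∈ range (k+l+1),
      PowerSeries.coeff (R := ℂ) p f * PowerSeries.coeff (R := ℂ) (k+l-p) g * ((k+l).choose k : ℂ)
      = ∑ a ∈ range (k+1), PowerSeries.coeff (R := ℂ) p f * PowerSeries.coeff (R := ℂ) (k+l-p) g *
          ((p.choose a : ℂ) * ((k+l-p).choose (k-a) : ℂ)) := by
    intro p hp
    rw [mem_range] at hp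
    have hchoose : (k+l).choose k = ∑ a ∈ range (k+1), p.choose a * (k+l-p).choose (k-a) := by
      have h := Nat.add_choose_eq p (k+l-p) k
      rw [Finset.Nat.sum_antidiagonal_eq_sum_range_succ_mk] at h
      have hp' : p + (k+l-p) = k+l := by omega
      rw [hp'] at h
      exact h
    rw [hchoose]
    push_cast
    rw [Finset.mul_sum]
  rw [Finset.sum_congr rfl hV, Finset.sum_comm]
  refine Finset.sum_congr rfl fun a ha => ?_
  have ha' : a ≤ k := by rw [mem_range] at ha; omega
  symm
  have step1 : ∑ b ∈ range (l+1),
      (PowerSeries.coeff (R := ℂ) (a+b) f * ((a+b).choose a : ℂ)) *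
      (PowerSeries.coeff (R := ℂ) ((k-a)+(l-b)) g * (((k-a)+(l-b)).choose (k-a) : ℂ))
      = ∑ b ∈ range (l+1),
        PowerSeries.coeff (R := ℂ) (a+b) f * PowerSeries.coeff (R := ℂ) (k+l-(a+b)) g *
          (((a+b).choose a : ℂ) * ((k+l-(a+b)).choose (k-a) : ℂ)) := by
    refine Finset.sum_congr rfl fun b hb => ?_
    rw [mem_range] at hb
    have he : (k-a)+(l-b) = k+l-(a+b) := by omega
    rw [he]; ring
  rw [step1]
  rw [show (range (l+1)).sum (fun b => PowerSeries.coeff (R := ℂ) (a+b) f *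
        PowerSeries.coeff (R := ℂ) (k+l-(a+b)) g *
        (((a+b).choose a : ℂ) * ((k+l-(a+b)).choose (k-a) : ℂ)))
      = ∑ p ∈ (range (l+1)).image (fun b => a + b),
          PowerSeries.coeff (R := ℂ) p f * PowerSeries.coeff (R := ℂ) (k+l-p) g *
          ((p.choose a : ℂ) * ((k+l-p).choose (k-a) : ℂ)) from
    (Finset.sum_image (f := fun p => PowerSeries.coeff (R := ℂ) p f * PowerSeries.coeff (R := ℂ) (k+l-p) g *
          ((p.choose a : ℂ) * ((k+l-p).choose (k-a) : ℂ))) (g := fun b => a + b)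
      (fun x _ y _ h => Nat.add_left_cancel h)).symm]
  refine Finset.sum_subset ?_ ?_
  · intro p hp
    simp only [Finset.mem_image, mem_range] at hp
    obtain ⟨b, hb, rfl⟩ := hp
    rw [mem_range]; omega
  · intro p hp hnot
    rw [mem_range] at hp
    simp only [Finset.mem_image, mem_range] at hnot
    push_neg at hnot
    by_cases hpa : p < a
    · have : p.choose a = 0 := Nat.choose_eq_zero_of_lt hpa
      rw [this]; push_cast; ring
    · push_neg at hpa
      have hgt : a + l < p := by
        by_contra hle
        push_neg at hle
        exact hnot (p - a) (by omega) (by omega)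
      have : (k+l-p).choose (k-a) = 0 := Nat.choose_eq_zero_of_lt (by omega)
      rw [this]; push_cast; ring

lemma phi2fun_mul (f g : ℂ⟦X⟧) : phi2fun (f * g) = phi2fun f * phi2fun g := by
  funext m
  obtain ⟨k, l, rfl⟩ : ∃ k l, m = fs k l := ⟨m 0, m 1, fin2_eq m⟩
  have hRHS : (phi2fun f * phi2fun g) (fs k l)
      = ∑ a ∈ range (k+1), ∑ b ∈ range (l+1),
          (if a = 0 then PowerSeries.coeff (R := ℂ) b f else 0) *
          (if k - a = 0 then PowerSeries.coeff (R := ℂ) (l-b) g else 0) := by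
    show MvPowerSeries.coeff (R := ℂ) (fs k l) (phi2fun f * phi2fun g) = _
    rw [MvPowerSeries.coeff_mul, sum_antidiagonal_fs]
    refine Finset.sum_congr rfl fun a _ => Finset.sum_congr rfl fun b _ => ?_
    show phi2fun f (fs a b) * phi2fun g (fs (k - a) (l - b)) = _
    simp only [phi2fun, fs_apply0, fs_apply1]
  rw [hRHS]
  by_cases hk : k = 0
  · subst hk
    rw [Finset.sum_range_one]
    show (if (fs 0 l) 0 = 0 then PowerSeries.coeff (R := ℂ) ((fs 0 l) 1) (f*g) else 0) = _
    rw [fs_apply0, fs_apply1, if_pos rfl, PowerSeries.coeff_mul,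
      Finset.Nat.sum_antidiagonal_eq_sum_range_succ_mk]
    simp
  · have hz : ∀ a ∈ range (k+1), ∀ b ∈ range (l+1),
        (if a = 0 then PowerSeries.coeff (R := ℂ) b f else 0) *
        (if k - a = 0 then PowerSeries.coeff (R := ℂ) (l-b) g else 0) = 0 := by
      intro a _ b _
      by_cases ha : a = 0
      · subst ha
        rw [if_neg (show ¬ (k - 0 = 0) by omega), mul_zero]
      · rw [if_neg ha, zero_mul]
    rw [Finset.sum_congr rfl fun a ha => Finset.sum_congr rfl (hz a ha)]
    show (if (fs k l) 0 = 0 then PowerSeries.coeff (R := ℂ) ((fs k l) 1) (f*g) else 0) = _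
    rw [fs_apply0, if_neg hk]
    simp

/-- The ring homomorphism `ℂ⟦X⟧ →+* MvPowerSeries (Fin 2) ℂ`, `X ↦ t₁ + t₂`. -/
noncomputable def phi12 : ℂ⟦X⟧ →+* MvPowerSeries (Fin 2) ℂ where
  toFun := phi12fun
  map_one' := by
    funext m
    obtain ⟨k, l, rfl⟩ : ∃ k l, m = fs k l := ⟨m 0, m 1, fin2_eq m⟩
    show PowerSeries.coeff (R := ℂ) ((fs k l) 0 + (fs k l) 1) 1 * (((fs k l) 0 + (fs k l) 1).choose ((fs k l) 0) : ℂ)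
      = MvPowerSeries.coeff (R := ℂ) (fs k l) 1
    rw [fs_apply0, fs_apply1, PowerSeries.coeff_one, MvPowerSeries.coeff_one]
    by_cases h : k + l = 0
    · have hk : k = 0 := by omega
      have hl : l = 0 := by omega
      subst hk; subst hl
      simp [fs_zero]
    · rw [if_neg h, if_neg (by rw [fs_eq_zero_iff]; omega)]
      ring
  map_mul' := phi12fun_mul
  map_zero' := by
    funext m
    show PowerSeries.coeff (R := ℂ) (m 0 + m 1) 0 * _ = (0 : MvPowerSeries (Fin 2) ℂ) m
    simp
    rfl
  map_add' := by
    intro f g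
    funext m
    show PowerSeries.coeff (R := ℂ) (m 0 + m 1) (f + g) * _ = (phi12fun f + phi12fun g) m
    rw [map_add, add_mul]
    rfl

/-- The ring homomorphism `ℂ⟦X⟧ →+* MvPowerSeries (Fin 2) ℂ`, `X ↦ t₂`. -/
noncomputable def phi2 : ℂ⟦X⟧ →+* MvPowerSeries (Fin 2) ℂ where
  toFun := phi2fun
  map_one' := by
    funext m
    obtain ⟨k, l, rfl⟩ : ∃ k l, m = fs k l := ⟨m 0, m 1, fin2_eq m⟩
    show (if (fs k l) 0 = 0 then PowerSeries.coeff (R := ℂ) ((fs k l) 1) 1 else 0)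
      = MvPowerSeries.coeff (R := ℂ) (fs k l) 1
    rw [fs_apply0, fs_apply1, PowerSeries.coeff_one, MvPowerSeries.coeff_one]
    by_cases hk : k = 0
    · subst hk
      rw [if_pos rfl]
      by_cases hl : l = 0
      · subst hl; rw [if_pos rfl, if_pos (by rw [← fs_zero])]
      · rw [if_neg hl, if_neg (by rw [fs_eq_zero_iff]; omega)]
    · rw [if_neg hk, if_neg (by rw [fs_eq_zero_iff]; omega)]
  map_mul' := phi2fun_mul
  map_zero' := by
    funext m
    show (if m 0 = 0 then PowerSeries.coeff (R := ℂ) (m 1) 0 else 0) = (0 : MvPowerSeries (Fin 2) ℂ) m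
    simp
    rfl
  map_add' := by
    intro f g
    funext m
    show (if m 0 = 0 then PowerSeries.coeff (R := ℂ) (m 1) (f + g) else 0) = (phi2fun f + phi2fun g) m
    show _ = phi2fun f m + phi2fun g m
    simp only [phi2fun, map_add]
    split <;> simp
lemma phi12_apply (f : ℂ⟦X⟧) (m : Fin 2 →₀ ℕ) :
    phi12 f m = PowerSeries.coeff (R := ℂ) (m 0 + m 1) f * ((m 0 + m 1).choose (m 0) : ℂ) := rfl

lemma phi2_apply (f : ℂ⟦X⟧) (m : Fin 2 →₀ ℕ) :
    phi2 f m = if m 0 = 0 then PowerSeries.coeff (R := ℂ) (m 1) f else 0 := rfl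

lemma phi12_C (x : ℂ) : phi12 (PowerSeries.C (R := ℂ) x) = MvPowerSeries.C (σ := Fin 2) (R := ℂ) x := by
  funext m
  obtain ⟨k, l, rfl⟩ : ∃ k l, m = fs k l := ⟨m 0, m 1, fin2_eq m⟩
  show PowerSeries.coeff (R := ℂ) ((fs k l) 0 + (fs k l) 1) (PowerSeries.C (R := ℂ) x) *
      (((fs k l) 0 + (fs k l) 1).choose ((fs k l) 0) : ℂ) = MvPowerSeries.coeff (R := ℂ) (fs k l) (MvPowerSeries.C (σ := Fin 2) (R := ℂ) x)
  rw [fs_apply0, fs_apply1, PowerSeries.coeff_C, MvPowerSeries.coeff_C]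
  by_cases h : k + l = 0
  · have hk : k = 0 := by omega
    have hl : l = 0 := by omega
    subst hk; subst hl
    simp [fs_zero]
  · rw [if_neg h, if_neg (by rw [fs_eq_zero_iff]; omega)]
    ring

lemma phi2_C (x : ℂ) : phi2 (PowerSeries.C (R := ℂ) x) = MvPowerSeries.C (σ := Fin 2) (R := ℂ) x := by
  funext m
  obtain ⟨k, l, rfl⟩ : ∃ k l, m = fs k l := ⟨m 0, m 1, fin2_eq m⟩
  show (if (fs k l) 0 = 0 then PowerSeries.coeff (R := ℂ) ((fs k l) 1) (PowerSeries.C (R := ℂ) x) else 0)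
      = MvPowerSeries.coeff (R := ℂ) (fs k l) (MvPowerSeries.C (σ := Fin 2) (R := ℂ) x)
  rw [fs_apply0, fs_apply1, PowerSeries.coeff_C, MvPowerSeries.coeff_C]
  by_cases hk : k = 0
  · subst hk
    rw [if_pos rfl]
    by_cases hl : l = 0
    · subst hl; rw [if_pos rfl, if_pos (fs_zero)]
    · rw [if_neg hl, if_neg (by rw [fs_eq_zero_iff]; omega)]
  · rw [if_neg hk, if_neg (by rw [fs_eq_zero_iff]; omega)]

lemma phi12_constantCoeff (f : ℂ⟦X⟧) :
    MvPowerSeries.constantCoeff (σ := Fin 2) (R := ℂ) (phi12 f) = PowerSeries.constantCoeff (R := ℂ) f := by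
  have h1 : MvPowerSeries.constantCoeff (σ := Fin 2) (R := ℂ) (phi12 f) = phi12 f 0 := rfl
  have h2 : PowerSeries.constantCoeff (R := ℂ) f = PowerSeries.coeff (R := ℂ) 0 f :=
    congrFun (PowerSeries.coeff_zero_eq_constantCoeff).symm f
  rw [h1, h2, phi12_apply]
  norm_num

lemma phi2_constantCoeff (f : ℂ⟦X⟧) :
    MvPowerSeries.constantCoeff (σ := Fin 2) (R := ℂ) (phi2 f) = PowerSeries.constantCoeff (R := ℂ) f := by
  have h1 : MvPowerSeries.constantCoeff (σ := Fin 2) (R := ℂ) (phi2 f) = phi2 f 0 := rfl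
  have h2 : PowerSeries.constantCoeff (R := ℂ) f = PowerSeries.coeff (R := ℂ) 0 f :=
    congrFun (PowerSeries.coeff_zero_eq_constantCoeff).symm f
  rw [h1, h2, phi2_apply]
  norm_num

lemma phi12_exp (γ : ℂ) : phi12 (rescale γ (exp ℂ)) = expT12 γ := by
  funext m
  rw [phi12_apply, coeff_rescale, coeff_exp]
  show _ = γ ^ (m 0 + m 1) / (((m 0).factorial : ℂ) * ((m 1).factorial : ℂ))
  set a := m 0
  set b := m 1
  have halg : (algebraMap ℚ ℂ) (1 / ((a + b).factorial : ℚ)) = 1 / ((a + b).factorial : ℂ) := by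
    push_cast
    simp
  rw [halg]
  have hkey : (((a+b).choose a : ℕ) : ℂ) * (a.factorial : ℂ) * (b.factorial : ℂ)
      = ((a+b).factorial : ℂ) := by
    have h := Nat.choose_mul_factorial_mul_factorial (Nat.le_add_right a b)
    rw [Nat.add_sub_cancel_left] at h
    exact_mod_cast congrArg (fun n : ℕ => (n : ℂ)) h
  have h1 : ((a+b).factorial : ℂ) ≠ 0 := Nat.cast_ne_zero.mpr (Nat.factorial_ne_zero _)
  have h2 : ((a).factorial : ℂ) ≠ 0 := Nat.cast_ne_zero.mpr (Nat.factorial_ne_zero _)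
  have h3 : ((b).factorial : ℂ) ≠ 0 := Nat.cast_ne_zero.mpr (Nat.factorial_ne_zero _)
  field_simp
  linear_combination γ ^ (a + b) * hkey

lemma phi2_exp (γ : ℂ) : phi2 (rescale γ (exp ℂ)) = expT2 γ := by
  funext m
  rw [phi2_apply, coeff_rescale, coeff_exp]
  show _ = if m 0 = 0 then γ ^ (m 1) / ((m 1).factorial : ℂ) else 0
  have halg : (algebraMap ℚ ℂ) (1 / ((m 1).factorial : ℚ)) = 1 / ((m 1).factorial : ℂ) := by
    push_cast
    simp
  rw [halg]
  split
  · rw [mul_one_div]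
  · rfl
section Roots
open Polynomial

variable {c : ℕ}

lemma sumRoots (hc : 1 < c) (n : ℕ) :
    ∑ ξ ∈ nthRootsFinset c (1 : ℂ), ξ ^ n = if c ∣ n then (c : ℂ) else 0 := by
  obtain ⟨ζ, hζ⟩ : ∃ ζ : ℂ, IsPrimitiveRoot ζ c := ⟨_, Complex.isPrimitiveRoot_exp c (by omega)⟩
  by_cases hd : c ∣ n
  · rw [if_pos hd]
    calc ∑ ξ ∈ nthRootsFinset c (1 : ℂ), ξ ^ n = ∑ _ξ ∈ nthRootsFinset c (1 : ℂ), (1 : ℂ) :=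
          Finset.sum_congr rfl (fun ξ hξ => by
            obtain ⟨t, rfl⟩ := hd
            rw [pow_mul, (Polynomial.mem_nthRootsFinset (by omega : 0 < c) (1 : ℂ)).mp hξ, one_pow])
      _ = (c : ℂ) := by
          rw [Finset.sum_const, hζ.card_nthRootsFinset, nsmul_eq_mul, mul_one]
  · rw [if_neg hd]
    have hζS : ζ ∈ nthRootsFinset c (1 : ℂ) := hζ.mem_nthRootsFinset (by omega)
    have hζ0 : ζ ≠ 0 := by
      intro h
      exact absurd ((Polynomial.mem_nthRootsFinset (by omega : 0 < c) (1 : ℂ)).mp hζS)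
        (by rw [h, zero_pow (by omega : c ≠ 0)]; exact zero_ne_one)
    have hrot : ∑ ξ ∈ nthRootsFinset c (1 : ℂ), (ζ * ξ) ^ n = ∑ ξ ∈ nthRootsFinset c (1 : ℂ), ξ ^ n := by
      refine Finset.sum_nbij' (i := fun ξ => ζ * ξ) (j := fun ξ => ζ⁻¹ * ξ) ?_ ?_ ?_ ?_ ?_
      · intro ξ hξ; have h := mul_mem_nthRootsFinset hζS hξ; rwa [mul_one] at h
      · intro ξ hξ
        rw [← mul_one (1 : ℂ)]
        refine mul_mem_nthRootsFinset ?_ hξ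
        rw [Polynomial.mem_nthRootsFinset (by omega : 0 < c), inv_pow,
          ((Polynomial.mem_nthRootsFinset (by omega : 0 < c) (1 : ℂ)).mp hζS), inv_one]
      · intro ξ _; field_simp
      · intro ξ _; field_simp
      · intro ξ _; rfl
    have hfac : ∑ ξ ∈ nthRootsFinset c (1 : ℂ), (ζ * ξ) ^ n
        = ζ ^ n * ∑ ξ ∈ nthRootsFinset c (1 : ℂ), ξ ^ n := by
      rw [Finset.mul_sum]
      exact Finset.sum_congr rfl fun ξ _ => mul_pow ζ ξ n
    have hz : ζ ^ n ≠ 1 := fun h => hd ((hζ.pow_eq_one_iff_dvd n).mp h)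
    have h2 : (ζ ^ n - 1) * (∑ ξ ∈ nthRootsFinset c (1 : ℂ), ξ ^ n) = 0 := by
      rw [sub_mul, one_mul, ← hfac, hrot, sub_self]
    rcases mul_eq_zero.mp h2 with h | h
    · exact absurd h (sub_ne_zero.mpr hz)
    · exact h

lemma prodPolyRoots (hc : 1 < c) :
    ∏ ξ ∈ nthRootsFinset c (1 : ℂ), (1 - Polynomial.C ξ * Polynomial.X)
      = 1 - (Polynomial.X : ℂ[X]) ^ c := by
  obtain ⟨ζ, hζ⟩ : ∃ ζ : ℂ, IsPrimitiveRoot ζ c := ⟨_, Complex.isPrimitiveRoot_exp c (by omega)⟩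
  have hXc : (Polynomial.X : ℂ[X]) ^ c - 1 = ∏ ξ ∈ nthRootsFinset c (1 : ℂ), (Polynomial.X - Polynomial.C ξ) :=
    Polynomial.X_pow_sub_one_eq_prod (by omega) hζ
  have hconst : ∏ ξ ∈ nthRootsFinset c (1 : ℂ), (-ξ) = (-1 : ℂ) := by
    have hev := congrArg (Polynomial.eval 0) hXc
    simp only [Polynomial.eval_sub, Polynomial.eval_pow, Polynomial.eval_X, Polynomial.eval_one,
      Polynomial.eval_prod, Polynomial.eval_C] at hev
    rw [zero_pow (by omega : c ≠ 0)] at hev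
    simp only [zero_sub] at hev
    exact hev.symm
  have step1 : ∏ ξ ∈ nthRootsFinset c (1 : ℂ), (1 - Polynomial.C ξ * Polynomial.X)
      = ∏ ξ ∈ nthRootsFinset c (1 : ℂ), (Polynomial.C (-ξ) * (Polynomial.X - Polynomial.C ξ⁻¹)) := by
    refine Finset.prod_congr rfl fun ξ hξ => ?_
    have h0 : ξ ≠ 0 := Polynomial.ne_zero_of_mem_nthRootsFinset one_ne_zero hξ
    rw [mul_sub, ← Polynomial.C_mul, neg_mul, mul_inv_cancel₀ h0]
    simp only [map_neg, map_one]
    ring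
  have step2 : ∏ ξ ∈ nthRootsFinset c (1 : ℂ), (Polynomial.X - Polynomial.C ξ⁻¹)
      = ∏ ξ ∈ nthRootsFinset c (1 : ℂ), (Polynomial.X - Polynomial.C ξ) := by
    refine Finset.prod_nbij' (i := fun ξ => ξ⁻¹) (j := fun ξ => ξ⁻¹) ?_ ?_ ?_ ?_ ?_
    · intro ξ hξ
      rw [Polynomial.mem_nthRootsFinset (by omega : 0 < c), inv_pow,
        (Polynomial.mem_nthRootsFinset (by omega : 0 < c) (1 : ℂ)).mp hξ, inv_one]
    · intro ξ hξ
      rw [Polynomial.mem_nthRootsFinset (by omega : 0 < c), inv_pow,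
        (Polynomial.mem_nthRootsFinset (by omega : 0 < c) (1 : ℂ)).mp hξ, inv_one]
    · intro ξ _; simp
    · intro ξ _; simp
    · intro ξ _; rfl
  rw [step1, Finset.prod_mul_distrib, step2, ← map_prod, hconst, ← hXc]
  simp only [map_neg, map_one]
  ring
end Roots
section SeriesRoots
open Polynomial

variable {c : ℕ}

/-- Inverse of `1 - ξ X` in `ℂ⟦X⟧`. -/
noncomputable def iv (ξ : ℂ) : ℂ⟦X⟧ := PowerSeries.mk fun n => ξ ^ n

lemma iv_mul (ξ : ℂ) : (1 - PowerSeries.C (R := ℂ) ξ * PowerSeries.X) * iv ξ = 1 := by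
  rw [sub_mul, one_mul, mul_assoc]
  ext n
  cases n with
  | zero => simp [iv]
  | succ n =>
    rw [map_sub, PowerSeries.coeff_C_mul, PowerSeries.coeff_succ_X_mul]
    simp only [iv, PowerSeries.coeff_mk, PowerSeries.coeff_one, Nat.succ_ne_zero, if_false,
      pow_succ]
    ring

lemma prodSeriesRoots (hc : 1 < c) :
    ∏ ξ ∈ nthRootsFinset c (1 : ℂ), (1 - PowerSeries.C (R := ℂ) ξ * PowerSeries.X)
      = 1 - PowerSeries.X ^ c := by
  have h := congrArg (Polynomial.coeToPowerSeries.ringHom (R := ℂ)) (prodPolyRoots hc)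
  rw [map_prod, map_sub, map_one, map_pow] at h
  simp only [map_sub, map_one, map_mul, Polynomial.coeToPowerSeries.ringHom_apply,
    Polynomial.coe_C, Polynomial.coe_X] at h
  exact h

lemma starSeriesRoots (hc : 1 < c) :
    ∑ ξ ∈ nthRootsFinset c (1 : ℂ),
        ∏ η ∈ (nthRootsFinset c (1 : ℂ)).erase ξ, (1 - PowerSeries.C (R := ℂ) η * PowerSeries.X)
      = PowerSeries.C (R := ℂ) (c : ℂ) := by
  have hP := prodSeriesRoots hc
  have hprod_erase : ∀ ξ ∈ nthRootsFinset c (1 : ℂ),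
      ∏ η ∈ (nthRootsFinset c (1 : ℂ)).erase ξ, (1 - PowerSeries.C (R := ℂ) η * PowerSeries.X)
        = iv ξ * (1 - PowerSeries.X ^ c) := by
    intro ξ hξ
    have h1 : (1 - PowerSeries.C (R := ℂ) ξ * PowerSeries.X) *
        ∏ η ∈ (nthRootsFinset c (1 : ℂ)).erase ξ, (1 - PowerSeries.C (R := ℂ) η * PowerSeries.X)
        = 1 - PowerSeries.X ^ c := by
      rw [← Finset.mul_prod_erase _ _ hξ] at hP
      exact hP
    calc ∏ η ∈ (nthRootsFinset c (1 : ℂ)).erase ξ, (1 - PowerSeries.C (R := ℂ) η * PowerSeries.X)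
        = ((1 - PowerSeries.C (R := ℂ) ξ * PowerSeries.X) * iv ξ) *
            ∏ η ∈ (nthRootsFinset c (1 : ℂ)).erase ξ, (1 - PowerSeries.C (R := ℂ) η * PowerSeries.X) := by
          rw [iv_mul, one_mul]
      _ = iv ξ * ((1 - PowerSeries.C (R := ℂ) ξ * PowerSeries.X) *
            ∏ η ∈ (nthRootsFinset c (1 : ℂ)).erase ξ, (1 - PowerSeries.C (R := ℂ) η * PowerSeries.X)) := by
          ring
      _ = iv ξ * (1 - PowerSeries.X ^ c) := by rw [h1]
  rw [Finset.sum_congr rfl hprod_erase, ← Finset.sum_mul]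
  have hsum : ∑ ξ ∈ nthRootsFinset c (1 : ℂ), iv ξ
      = PowerSeries.mk (fun n => if c ∣ n then (c : ℂ) else 0) := by
    ext n
    rw [map_sum]
    simp only [iv, PowerSeries.coeff_mk]
    exact sumRoots hc n
  rw [hsum]
  ext n
  rw [mul_sub, mul_one, map_sub, PowerSeries.coeff_mul_X_pow', PowerSeries.coeff_mk,
    PowerSeries.coeff_C]
  by_cases h0 : n = 0
  · subst h0
    rw [if_pos (dvd_zero c), if_neg (by omega), if_pos rfl]
    ring
  · rw [if_neg h0]
    by_cases hcn : c ≤ n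
    · rw [if_pos hcn, PowerSeries.coeff_mk]
      by_cases hdvd : c ∣ n
      · rw [if_pos hdvd, if_pos (Nat.dvd_sub hdvd dvd_rfl)]
        ring
      · rw [if_neg hdvd, if_neg (fun hcon => hdvd ((Nat.sub_add_cancel hcn) ▸ dvd_add hcon dvd_rfl))]
        ring
    · rw [if_neg hcn, if_neg (fun hdvd => hcn (Nat.le_of_dvd (by omega) hdvd))]
      ring

lemma starPolyRoots (hc : 1 < c) :
    ∑ ξ ∈ nthRootsFinset c (1 : ℂ),
        ∏ η ∈ (nthRootsFinset c (1 : ℂ)).erase ξ, (1 - Polynomial.C η * Polynomial.X)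
      = Polynomial.C (c : ℂ) := by
  apply (Polynomial.coe_inj (R := ℂ)).mp
  have hcoe : ((∑ ξ ∈ nthRootsFinset c (1 : ℂ),
        ∏ η ∈ (nthRootsFinset c (1 : ℂ)).erase ξ, (1 - Polynomial.C η * Polynomial.X) : ℂ[X]) : ℂ⟦X⟧)
      = ∑ ξ ∈ nthRootsFinset c (1 : ℂ),
          ∏ η ∈ (nthRootsFinset c (1 : ℂ)).erase ξ, (1 - PowerSeries.C (R := ℂ) η * PowerSeries.X) := by
    rw [← Polynomial.coeToPowerSeries.ringHom_apply, map_sum]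
    refine Finset.sum_congr rfl fun ξ _ => ?_
    rw [map_prod]
    refine Finset.prod_congr rfl fun η _ => ?_
    simp only [map_sub, map_one, map_mul, Polynomial.coeToPowerSeries.ringHom_apply,
      Polynomial.coe_C, Polynomial.coe_X]
  rw [hcoe, starSeriesRoots hc, Polynomial.coe_C]

lemma starOne (hc : 1 < c) :
    ∑ ξ ∈ nthRootsFinset c (1 : ℂ), ∏ η ∈ (nthRootsFinset c (1 : ℂ)).erase ξ, (1 - η) = (c : ℂ) := by
  have h := congrArg (Polynomial.eval 1) (starPolyRoots hc)
  simp only [Polynomial.eval_finset_sum, Polynomial.eval_prod, Polynomial.eval_sub,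
    Polynomial.eval_one, Polynomial.eval_mul, Polynomial.eval_C, Polynomial.eval_X,
    mul_one] at h
  exact h

lemma prodErase_one (hc : 1 < c) :
    ∏ η ∈ (nthRootsFinset c (1 : ℂ)).erase 1, (1 - η) = (c : ℂ) := by
  have h := starOne hc
  rw [Finset.sum_eq_single_of_mem (1 : ℂ) (Polynomial.one_mem_nthRootsFinset (by omega : 0 < c))
    (fun ξ hξ hne => Finset.prod_eq_zero
      (Finset.mem_erase.mpr ⟨fun h1 => hne h1.symm, Polynomial.one_mem_nthRootsFinset (by omega : 0 < c)⟩)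
      (by rw [sub_self]))] at h
  exact h

lemma sumInvRoots (hc : 1 < c) :
    ∑ ξ ∈ (nthRootsFinset c (1 : ℂ)).erase 1, (1 - ξ)⁻¹ = ((c : ℂ) - 1) / 2 := by
  obtain ⟨ζ, hζ⟩ : ∃ ζ : ℂ, IsPrimitiveRoot ζ c := ⟨_, Complex.isPrimitiveRoot_exp c (by omega)⟩
  have hcard : ((nthRootsFinset c (1 : ℂ)).erase 1).card = c - 1 := by
    rw [Finset.card_erase_of_mem (Polynomial.one_mem_nthRootsFinset (by omega : 0 < c)),
      hζ.card_nthRootsFinset]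
  have hmemT : ∀ ξ ∈ (nthRootsFinset c (1 : ℂ)).erase 1, ξ ≠ 1 ∧ ξ ∈ nthRootsFinset c (1 : ℂ) := by
    intro ξ hξ
    exact ⟨(Finset.mem_erase.mp hξ).1, (Finset.mem_erase.mp hξ).2⟩
  have hinvT : ∀ ξ ∈ (nthRootsFinset c (1 : ℂ)).erase 1, ξ⁻¹ ∈ (nthRootsFinset c (1 : ℂ)).erase 1 := by
    intro ξ hξ
    obtain ⟨hne, hS⟩ := hmemT ξ hξ
    refine Finset.mem_erase.mpr ⟨fun h => hne (by rwa [inv_eq_one] at h), ?_⟩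
    rw [Polynomial.mem_nthRootsFinset (by omega : 0 < c), inv_pow,
      (Polynomial.mem_nthRootsFinset (by omega : 0 < c) (1 : ℂ)).mp hS, inv_one]
  have hswap : ∑ ξ ∈ (nthRootsFinset c (1 : ℂ)).erase 1, (1 - ξ)⁻¹
      = ∑ ξ ∈ (nthRootsFinset c (1 : ℂ)).erase 1, (1 - ξ⁻¹)⁻¹ := by
    refine Finset.sum_nbij' (i := fun ξ => ξ⁻¹) (j := fun ξ => ξ⁻¹) hinvT hinvT ?_ ?_ ?_
    · intro ξ _; simp
    · intro ξ _; simp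
    · intro ξ _; rw [inv_inv]
  have heach : ∀ ξ ∈ (nthRootsFinset c (1 : ℂ)).erase 1, (1 - ξ⁻¹)⁻¹ = 1 - (1 - ξ)⁻¹ := by
    intro ξ hξ
    obtain ⟨hne, hS⟩ := hmemT ξ hξ
    have h0 : ξ ≠ 0 := Polynomial.ne_zero_of_mem_nthRootsFinset one_ne_zero hS
    have h1 : (1 : ℂ) - ξ ≠ 0 := sub_ne_zero.mpr (fun h => hne h.symm)
    have h1' : ξ - 1 ≠ 0 := sub_ne_zero.mpr hne
    field_simp
    ring
  have h2 : ∑ ξ ∈ (nthRootsFinset c (1 : ℂ)).erase 1, (1 - ξ)⁻¹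
      = ((c : ℂ) - 1) - ∑ ξ ∈ (nthRootsFinset c (1 : ℂ)).erase 1, (1 - ξ)⁻¹ := by
    conv_lhs => rw [hswap, Finset.sum_congr rfl heach]
    rw [Finset.sum_sub_distrib, Finset.sum_const, hcard, nsmul_eq_mul, mul_one,
      Nat.cast_sub (by omega : 1 ≤ c), Nat.cast_one]
  linear_combination h2 / 2

end SeriesRoots
section Bernoulli

/-- The generating series `Σ_m (1-c^{m+1}) (B_{m+1}/(m+1)) γ^m X^m/m!`. -/
noncomputable def Hber (c : ℕ) (γ : ℂ) : ℂ⟦X⟧ :=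
  PowerSeries.mk fun m =>
    (1 - (c : ℂ) ^ (m + 1)) * (((bernoulli (m + 1) : ℚ) : ℂ) / ((m : ℂ) + 1)) * γ ^ m
      / (m.factorial : ℂ)

lemma XHber (c : ℕ) (γ : ℂ) :
    PowerSeries.C (R := ℂ) γ * PowerSeries.X * Hber c γ
      = rescale γ (bernoulliPowerSeries ℂ) - rescale ((c : ℂ) * γ) (bernoulliPowerSeries ℂ) := by
  ext n
  rw [map_sub, coeff_rescale, coeff_rescale, mul_assoc, PowerSeries.coeff_C_mul]
  cases n with
  | zero =>
    simp [bernoulliPowerSeries]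
  | succ m =>
    rw [PowerSeries.coeff_succ_X_mul]
    simp only [Hber, bernoulliPowerSeries, PowerSeries.coeff_mk]
    have hm1 : ((m : ℂ) + 1) ≠ 0 := by
      have h := Nat.cast_ne_zero (R := ℂ).mpr (by omega : m + 1 ≠ 0)
      push_cast at h
      exact h
    have hmf : ((m.factorial : ℂ)) ≠ 0 := Nat.cast_ne_zero.mpr (Nat.factorial_ne_zero _)
    have hdiv : ((((_root_.bernoulli (m+1)) / (((m+1).factorial : ℕ) : ℚ)) : ℚ) : ℂ)
        = ((_root_.bernoulli (m+1) : ℚ) : ℂ) / (((m : ℂ) + 1) * (m.factorial : ℂ)) := by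
      push_cast [Nat.factorial_succ]
      ring
    rw [eq_ratCast (algebraMap ℚ ℂ), hdiv]
    set B : ℂ := ((_root_.bernoulli (m+1) : ℚ) : ℂ) with hB
    field_simp
    ring

lemma rescaleB_mul (δ : ℂ) :
    rescale δ (bernoulliPowerSeries ℂ) * (rescale δ (exp ℂ) - 1)
      = PowerSeries.C (R := ℂ) δ * PowerSeries.X := by
  have h := congrArg (rescale δ) (bernoulliPowerSeries_mul_exp_sub_one ℂ)
  rw [map_mul, map_sub, map_one, rescale_X] at h
  exact h

lemma exp_pow_c (γ : ℂ) (c : ℕ) :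
    (rescale γ (exp ℂ)) ^ c = rescale ((c : ℂ) * γ) (exp ℂ) := by
  rw [← map_pow, PowerSeries.exp_pow_eq_rescale_exp, rescale_rescale]

end Bernoulli
lemma erase_erase_comm {α : Type*} [DecidableEq α] (s : Finset α) (a b : α) :
    (s.erase a).erase b = (s.erase b).erase a := by
  ext x
  simp only [Finset.mem_erase]
  tauto

section ONE
open Polynomial

variable {c : ℕ}

lemma one_lemma (hc : 1 < c) (γ : ℂ) :
    Hber c γ * ∏ ξ ∈ (nthRootsFinset c (1 : ℂ)).erase 1, (1 - PowerSeries.C (R := ℂ) ξ * rescale γ (exp ℂ))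
      = ∑ ξ ∈ (nthRootsFinset c (1 : ℂ)).erase 1,
          ∏ η ∈ ((nthRootsFinset c (1 : ℂ)).erase 1).erase ξ,
            (1 - PowerSeries.C (R := ℂ) η * rescale γ (exp ℂ)) := by
  set e : ℂ⟦X⟧ := rescale γ (exp ℂ) with he
  have hprodE : ∏ ξ ∈ nthRootsFinset c (1 : ℂ), (1 - PowerSeries.C (R := ℂ) ξ * e) = 1 - e ^ c := by
    have h := congrArg (Polynomial.aeval e) (prodPolyRoots hc)
    rw [map_prod, map_sub, map_one, map_pow, Polynomial.aeval_X] at h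
    simp only [map_sub, map_one, map_mul, Polynomial.aeval_C, Polynomial.aeval_X,
      PowerSeries.algebraMap_apply, Algebra.algebraMap_self, RingHom.id_apply] at h
    exact h
  have hstarE : ∑ ξ ∈ nthRootsFinset c (1 : ℂ),
      ∏ η ∈ (nthRootsFinset c (1 : ℂ)).erase ξ, (1 - PowerSeries.C (R := ℂ) η * e)
      = PowerSeries.C (R := ℂ) (c : ℂ) := by
    have h := congrArg (Polynomial.aeval e) (starPolyRoots hc)
    rw [map_sum] at h
    simp only [map_prod, map_sub, map_one, map_mul, Polynomial.aeval_C, Polynomial.aeval_X,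
      PowerSeries.algebraMap_apply, Algebra.algebraMap_self, RingHom.id_apply] at h
    exact h
  by_cases hγ : γ = 0
  · -- degenerate case e = 1
    have he1 : e = 1 := by
      rw [he, hγ, rescale_zero]
      simp
    have hH0 : Hber c γ = PowerSeries.C (R := ℂ) (((c : ℂ) - 1) / 2) := by
      rw [hγ]
      ext n
      cases n with
      | zero =>
        simp only [Hber, PowerSeries.coeff_mk, PowerSeries.coeff_zero_eq_constantCoeff,
          PowerSeries.constantCoeff_C]
        norm_num [_root_.bernoulli_one]
        ring
      | succ m =>
        simp [Hber, PowerSeries.coeff_C]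
    have hfac : ∀ ξ : ℂ, 1 - PowerSeries.C (R := ℂ) ξ * 1 = PowerSeries.C (R := ℂ) (1 - ξ) := by
      intro ξ
      rw [mul_one, map_sub, map_one]
    have hsumC : ∑ ξ ∈ (nthRootsFinset c (1 : ℂ)).erase 1,
        ∏ η ∈ ((nthRootsFinset c (1 : ℂ)).erase 1).erase ξ, (1 - η) = ((c : ℂ) - 1) / 2 * c := by
      have hterm : ∀ ξ ∈ (nthRootsFinset c (1 : ℂ)).erase 1,
          ∏ η ∈ ((nthRootsFinset c (1 : ℂ)).erase 1).erase ξ, (1 - η) = (1 - ξ)⁻¹ * c := by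
        intro ξ hξ
        have h1 : (1 : ℂ) - ξ ≠ 0 := sub_ne_zero.mpr (Ne.symm (Finset.mem_erase.mp hξ).1)
        have h2 : (1 - ξ) * ∏ η ∈ ((nthRootsFinset c (1 : ℂ)).erase 1).erase ξ, (1 - η) = (c : ℂ) :=
          (Finset.mul_prod_erase _ (fun η => 1 - η) hξ).trans (prodErase_one hc)
        rw [inv_mul_eq_div, eq_div_iff h1]
        linear_combination h2
      rw [Finset.sum_congr rfl hterm, ← Finset.sum_mul, sumInvRoots hc]
    rw [he1, hH0]
    have hL : PowerSeries.C (R := ℂ) (((c : ℂ) - 1) / 2) *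
        ∏ ξ ∈ (nthRootsFinset c (1 : ℂ)).erase 1, (1 - PowerSeries.C (R := ℂ) ξ * 1)
        = PowerSeries.C (R := ℂ) (((c : ℂ) - 1) / 2 * c) := by
      rw [Finset.prod_congr rfl (fun ξ _ => hfac ξ), ← map_prod, prodErase_one hc, ← map_mul]
    have hR : ∑ ξ ∈ (nthRootsFinset c (1 : ℂ)).erase 1,
        ∏ η ∈ ((nthRootsFinset c (1 : ℂ)).erase 1).erase ξ, (1 - PowerSeries.C (R := ℂ) η * 1)
        = PowerSeries.C (R := ℂ) (((c : ℂ) - 1) / 2 * c) := by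
      rw [Finset.sum_congr rfl (fun ξ _ => by
        rw [Finset.prod_congr rfl (fun η _ => hfac η), ← map_prod]), ← map_sum, hsumC]
    rw [hL, hR]
  · -- main case γ ≠ 0
    have hene : (1 : ℂ⟦X⟧) - e ≠ 0 := by
      intro h
      apply hγ
      have h1 := congrArg (PowerSeries.coeff (R := ℂ) 1) h
      simp only [map_sub, map_zero, he, coeff_rescale, coeff_exp, PowerSeries.coeff_one,
        one_ne_zero, if_false] at h1
      have h2 : (algebraMap ℚ ℂ) (1 / ((Nat.factorial 1 : ℕ) : ℚ)) = 1 := by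
        norm_num [Nat.factorial]
      rw [h2] at h1
      simpa using h1
    have hone : (1 : ℂ) ∈ nthRootsFinset c (1 : ℂ) := Polynomial.one_mem_nthRootsFinset (by omega : 0 < c)
    have hPe : (∏ ξ ∈ (nthRootsFinset c (1 : ℂ)).erase 1, (1 - PowerSeries.C (R := ℂ) ξ * e)) * (1 - e)
        = 1 - e ^ c := by
      rw [← Finset.mul_prod_erase _ _ hone] at hprodE
      calc (∏ ξ ∈ (nthRootsFinset c (1 : ℂ)).erase 1, (1 - PowerSeries.C (R := ℂ) ξ * e)) * (1 - e)
          = (1 - PowerSeries.C (R := ℂ) 1 * e) *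
              ∏ ξ ∈ (nthRootsFinset c (1 : ℂ)).erase 1, (1 - PowerSeries.C (R := ℂ) ξ * e) := by
            rw [map_one]
            ring
        _ = 1 - e ^ c := hprodE
    have hgeom : ∏ ξ ∈ (nthRootsFinset c (1 : ℂ)).erase 1, (1 - PowerSeries.C (R := ℂ) ξ * e)
        = ∑ i ∈ Finset.range c, e ^ i := by
      have hGe : (∑ i ∈ Finset.range c, e ^ i) * (1 - e) = 1 - e ^ c := by
        have h3 := geom_sum_mul e c
        linear_combination -h3
      exact mul_right_cancel₀ hene (hPe.trans hGe.symm)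
    refine mul_right_cancel₀ hene ?_
    have hLHS : Hber c γ * (∏ ξ ∈ (nthRootsFinset c (1 : ℂ)).erase 1, (1 - PowerSeries.C (R := ℂ) ξ * e)) * (1 - e)
        = Hber c γ * (1 - e ^ c) := by
      rw [mul_assoc, hPe]
    have hRHS : (∑ ξ ∈ (nthRootsFinset c (1 : ℂ)).erase 1,
          ∏ η ∈ ((nthRootsFinset c (1 : ℂ)).erase 1).erase ξ, (1 - PowerSeries.C (R := ℂ) η * e)) * (1 - e)
        = PowerSeries.C (R := ℂ) (c : ℂ)
          - ∏ ξ ∈ (nthRootsFinset c (1 : ℂ)).erase 1, (1 - PowerSeries.C (R := ℂ) ξ * e) := by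
      rw [Finset.sum_mul]
      have hterm : ∀ ξ ∈ (nthRootsFinset c (1 : ℂ)).erase 1,
          (∏ η ∈ ((nthRootsFinset c (1 : ℂ)).erase 1).erase ξ, (1 - PowerSeries.C (R := ℂ) η * e)) * (1 - e)
            = ∏ η ∈ (nthRootsFinset c (1 : ℂ)).erase ξ, (1 - PowerSeries.C (R := ℂ) η * e) := by
        intro ξ hξ
        have hξ1 : ξ ≠ 1 := (Finset.mem_erase.mp hξ).1
        have h1mem : (1 : ℂ) ∈ (nthRootsFinset c (1 : ℂ)).erase ξ :=
          Finset.mem_erase.mpr ⟨Ne.symm hξ1, hone⟩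
        have hme := Finset.mul_prod_erase ((nthRootsFinset c (1 : ℂ)).erase ξ)
          (fun η => 1 - PowerSeries.C (R := ℂ) η * e) h1mem
        rw [erase_erase_comm] at hme
        calc (∏ η ∈ ((nthRootsFinset c (1 : ℂ)).erase 1).erase ξ, (1 - PowerSeries.C (R := ℂ) η * e)) * (1 - e)
            = (1 - PowerSeries.C (R := ℂ) 1 * e) *
                ∏ η ∈ ((nthRootsFinset c (1 : ℂ)).erase 1).erase ξ, (1 - PowerSeries.C (R := ℂ) η * e) := by
              rw [map_one]
              ring
          _ = ∏ η ∈ (nthRootsFinset c (1 : ℂ)).erase ξ, (1 - PowerSeries.C (R := ℂ) η * e) := hme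
      rw [Finset.sum_congr rfl hterm]
      have hsum := Finset.add_sum_erase (nthRootsFinset c (1 : ℂ))
        (fun ξ => ∏ η ∈ (nthRootsFinset c (1 : ℂ)).erase ξ, (1 - PowerSeries.C (R := ℂ) η * e)) hone
      rw [hstarE] at hsum
      linear_combination hsum
    rw [hLHS, hRHS, hgeom]
    -- the Bernoulli identity
    have hXne : PowerSeries.C (R := ℂ) γ * PowerSeries.X ≠ 0 := by
      intro h
      apply hγ
      have h1 := congrArg (PowerSeries.coeff (R := ℂ) 1) h
      simpa using h1
    apply mul_left_cancel₀ hXne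
    have h4 := XHber c γ
    have h2 := rescaleB_mul γ
    have h1 := rescaleB_mul ((c : ℂ) * γ)
    have h5 : e ^ c = rescale ((c : ℂ) * γ) (exp ℂ) := exp_pow_c γ c
    rw [← h5] at h1
    have hCc : PowerSeries.C (R := ℂ) ((c : ℂ) * γ)
        = PowerSeries.C (R := ℂ) (c : ℂ) * PowerSeries.C (R := ℂ) γ := by rw [map_mul]
    rw [hCc] at h1
    have h3 := geom_sum_mul e c
    rw [← he] at h2
    linear_combination (1 - e ^ c) * h4 + (rescale γ (bernoulliPowerSeries ℂ)) * h3
      - (∑ i ∈ Finset.range c, e ^ i) * h2 + h1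

lemma keySum (hc : 1 < c) (γ : ℂ) (φ : ℂ⟦X⟧ →+* MvPowerSeries (Fin 2) ℂ)
    (hCφ : ∀ x : ℂ, φ (PowerSeries.C (R := ℂ) x) = MvPowerSeries.C (σ := Fin 2) (R := ℂ) x)
    (h0φ : ∀ f, MvPowerSeries.constantCoeff (σ := Fin 2) (R := ℂ) (φ f) = PowerSeries.constantCoeff (R := ℂ) f) :
    ∑ ξ ∈ (nthRootsFinset c (1 : ℂ)).erase 1,
        (1 - MvPowerSeries.C (σ := Fin 2) (R := ℂ) ξ * φ (rescale γ (exp ℂ)))⁻¹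
      = φ (Hber c γ) := by
  set E := φ (rescale γ (exp ℂ)) with hE
  have hconstE : MvPowerSeries.constantCoeff (σ := Fin 2) (R := ℂ) E = 1 := by
    rw [hE, h0φ]
    have : PowerSeries.constantCoeff (R := ℂ) (rescale γ (exp ℂ))
        = PowerSeries.coeff (R := ℂ) 0 (rescale γ (exp ℂ)) :=
      congrFun (PowerSeries.coeff_zero_eq_constantCoeff).symm _
    rw [this, coeff_rescale, coeff_exp]
    norm_num
  have hne : ∀ ξ ∈ (nthRootsFinset c (1 : ℂ)).erase 1,
      MvPowerSeries.constantCoeff (σ := Fin 2) (R := ℂ) (1 - MvPowerSeries.C (σ := Fin 2) (R := ℂ) ξ * E) ≠ 0 := by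
    intro ξ hξ
    rw [map_sub, map_one, map_mul, MvPowerSeries.constantCoeff_C, hconstE, mul_one]
    exact sub_ne_zero.mpr (Ne.symm (Finset.mem_erase.mp hξ).1)
  set P := ∏ ξ ∈ (nthRootsFinset c (1 : ℂ)).erase 1, (1 - MvPowerSeries.C (σ := Fin 2) (R := ℂ) ξ * E) with hP
  have hPne : MvPowerSeries.constantCoeff (σ := Fin 2) (R := ℂ) P ≠ 0 := by
    rw [hP, map_prod]
    exact Finset.prod_ne_zero_iff.mpr hne
  have hφP : φ (∏ ξ ∈ (nthRootsFinset c (1 : ℂ)).erase 1,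
      (1 - PowerSeries.C (R := ℂ) ξ * rescale γ (exp ℂ))) = P := by
    rw [map_prod]
    exact Finset.prod_congr rfl fun ξ _ => by rw [map_sub, map_one, map_mul, hCφ]
  have hφW : φ (∑ ξ ∈ (nthRootsFinset c (1 : ℂ)).erase 1,
      ∏ η ∈ ((nthRootsFinset c (1 : ℂ)).erase 1).erase ξ, (1 - PowerSeries.C (R := ℂ) η * rescale γ (exp ℂ)))
      = ∑ ξ ∈ (nthRootsFinset c (1 : ℂ)).erase 1,
          ∏ η ∈ ((nthRootsFinset c (1 : ℂ)).erase 1).erase ξ, (1 - MvPowerSeries.C (σ := Fin 2) (R := ℂ) η * E) := by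
    rw [map_sum]
    refine Finset.sum_congr rfl fun ξ _ => ?_
    rw [map_prod]
    exact Finset.prod_congr rfl fun η _ => by rw [map_sub, map_one, map_mul, hCφ]
  have hONE := congrArg φ (one_lemma hc γ)
  rw [map_mul, hφP, hφW] at hONE
  have hSP : (∑ ξ ∈ (nthRootsFinset c (1 : ℂ)).erase 1,
      (1 - MvPowerSeries.C (σ := Fin 2) (R := ℂ) ξ * E)⁻¹) * P
      = ∑ ξ ∈ (nthRootsFinset c (1 : ℂ)).erase 1,
          ∏ η ∈ ((nthRootsFinset c (1 : ℂ)).erase 1).erase ξ, (1 - MvPowerSeries.C (σ := Fin 2) (R := ℂ) η * E) := by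
    rw [Finset.sum_mul]
    refine Finset.sum_congr rfl fun ξ hξ => ?_
    have hfe := Finset.mul_prod_erase ((nthRootsFinset c (1 : ℂ)).erase 1)
      (fun η => 1 - MvPowerSeries.C (σ := Fin 2) (R := ℂ) η * E) hξ
    calc (1 - MvPowerSeries.C (σ := Fin 2) (R := ℂ) ξ * E)⁻¹ * P
        = (1 - MvPowerSeries.C (σ := Fin 2) (R := ℂ) ξ * E)⁻¹ * ((1 - MvPowerSeries.C (σ := Fin 2) (R := ℂ) ξ * E) *
            ∏ η ∈ ((nthRootsFinset c (1 : ℂ)).erase 1).erase ξ,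
              (1 - MvPowerSeries.C (σ := Fin 2) (R := ℂ) η * E)) := by rw [hP, ← hfe]
      _ = ((1 - MvPowerSeries.C (σ := Fin 2) (R := ℂ) ξ * E)⁻¹ * (1 - MvPowerSeries.C (σ := Fin 2) (R := ℂ) ξ * E)) *
            ∏ η ∈ ((nthRootsFinset c (1 : ℂ)).erase 1).erase ξ,
              (1 - MvPowerSeries.C (σ := Fin 2) (R := ℂ) η * E) := by ring
      _ = ∏ η ∈ ((nthRootsFinset c (1 : ℂ)).erase 1).erase ξ,
            (1 - MvPowerSeries.C (σ := Fin 2) (R := ℂ) η * E) := by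
          rw [MvPowerSeries.inv_mul_cancel _ (hne ξ hξ), one_mul]
  have hfinal := hSP.trans hONE.symm
  calc ∑ ξ ∈ (nthRootsFinset c (1 : ℂ)).erase 1, (1 - MvPowerSeries.C (σ := Fin 2) (R := ℂ) ξ * E)⁻¹
      = (∑ ξ ∈ (nthRootsFinset c (1 : ℂ)).erase 1, (1 - MvPowerSeries.C (σ := Fin 2) (R := ℂ) ξ * E)⁻¹) * P * P⁻¹ := by
        rw [mul_assoc, MvPowerSeries.mul_inv_cancel _ hPne, mul_one]
    _ = φ (Hber c γ) * P * P⁻¹ := by rw [hfinal]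
    _ = φ (Hber c γ) := by rw [mul_assoc, MvPowerSeries.mul_inv_cancel _ hPne, mul_one]

end ONE
lemma coeff_phi12 (f : ℂ⟦X⟧) (m : Fin 2 →₀ ℕ) :
    MvPowerSeries.coeff (R := ℂ) m (phi12 f)
      = PowerSeries.coeff (R := ℂ) (m 0 + m 1) f * ((m 0 + m 1).choose (m 0) : ℂ) := rfl

lemma coeff_phi2 (f : ℂ⟦X⟧) (m : Fin 2 →₀ ℕ) :
    MvPowerSeries.coeff (R := ℂ) m (phi2 f)
      = if m 0 = 0 then PowerSeries.coeff (R := ℂ) (m 1) f else 0 := rfl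


/-- For an integer `c > 1` and `k, l ≥ 0`:
`Σ_{ξ₁,ξ₂ ∈ μ_c \ {1}} 𝔅(k,l;ξ₁,ξ₂;γ₁,γ₂)
  = Σ_{j=0}^{l} C(l,j) (1-c^{k+j+1})(1-c^{l-j+1}) (B_{k+j+1}/(k+j+1)) (B_{l-j+1}/(l-j+1))
      γ₁^{k+j} γ₂^{l-j}`. -/
theorem statement6 (c : ℕ) (hc : 1 < c) (γ₁ γ₂ : ℂ) (k l : ℕ) :
    ∑ ξ₁ ∈ (nthRootsFinset c (1 : ℂ)).erase 1, ∑ ξ₂ ∈ (nthRootsFinset c (1 : ℂ)).erase 1,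
        doubleBernoulli ξ₁ ξ₂ γ₁ γ₂ k l =
      ∑ j ∈ Finset.range (l + 1),
        (l.choose j : ℂ) * (1 - (c : ℂ) ^ (k + j + 1)) * (1 - (c : ℂ) ^ (l - j + 1)) *
          (((bernoulli (k + j + 1) : ℚ) : ℂ) / (k + j + 1)) *
          (((bernoulli (l - j + 1) : ℚ) : ℂ) / (l - j + 1)) *
          γ₁ ^ (k + j) * γ₂ ^ (l - j) := by
  classical
  have hkey1 : ∑ ξ ∈ (nthRootsFinset c (1 : ℂ)).erase 1,
      (1 - MvPowerSeries.C (σ := Fin 2) (R := ℂ) ξ * expT12 γ₁)⁻¹ = phi12 (Hber c γ₁) := by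
    rw [← phi12_exp γ₁]
    exact keySum hc γ₁ phi12 phi12_C phi12_constantCoeff
  have hkey2 : ∑ ξ ∈ (nthRootsFinset c (1 : ℂ)).erase 1,
      (1 - MvPowerSeries.C (σ := Fin 2) (R := ℂ) ξ * expT2 γ₂)⁻¹ = phi2 (Hber c γ₂) := by
    rw [← phi2_exp γ₂]
    exact keySum hc γ₂ phi2 phi2_C phi2_constantCoeff
  have hstep : ∑ ξ₁ ∈ (nthRootsFinset c (1 : ℂ)).erase 1, ∑ ξ₂ ∈ (nthRootsFinset c (1 : ℂ)).erase 1,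
      doubleBernoulli ξ₁ ξ₂ γ₁ γ₂ k l
      = (k.factorial : ℂ) * (l.factorial : ℂ) *
        MvPowerSeries.coeff (R := ℂ) (fs k l)
          ((∑ ξ₁ ∈ (nthRootsFinset c (1 : ℂ)).erase 1,
              (1 - MvPowerSeries.C (σ := Fin 2) (R := ℂ) ξ₁ * expT12 γ₁)⁻¹) *
           (∑ ξ₂ ∈ (nthRootsFinset c (1 : ℂ)).erase 1,
              (1 - MvPowerSeries.C (σ := Fin 2) (R := ℂ) ξ₂ * expT2 γ₂)⁻¹)) := by
    rw [Finset.sum_mul_sum, map_sum, Finset.mul_sum]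
    refine Finset.sum_congr rfl fun ξ₁ _ => ?_
    rw [map_sum, Finset.mul_sum]
    exact Finset.sum_congr rfl fun ξ₂ _ => rfl
  rw [hstep, hkey1, hkey2, MvPowerSeries.coeff_mul, sum_antidiagonal_fs, Finset.mul_sum]
  rw [Finset.sum_eq_single_of_mem k (Finset.self_mem_range_succ k) (fun a ha hak => ?_)]
  swap
  · -- terms with a ≠ k vanish
    rw [mem_range] at ha
    have hz : ∀ b ∈ range (l + 1),
        MvPowerSeries.coeff (R := ℂ) (fs a b) (phi12 (Hber c γ₁)) *
          MvPowerSeries.coeff (R := ℂ) (fs (k - a) (l - b)) (phi2 (Hber c γ₂)) = 0 := by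
      intro b _
      rw [coeff_phi2, fs_apply0, if_neg (by omega : ¬ (k - a = 0)), mul_zero]
    rw [Finset.sum_congr rfl hz, Finset.sum_const, smul_zero, mul_zero]
  · -- main term a = k
    rw [Finset.mul_sum]
    refine Finset.sum_congr rfl fun b hb => ?_
    rw [mem_range] at hb
    have hbl : b ≤ l := by omega
    rw [coeff_phi12, coeff_phi2, fs_apply0, fs_apply1, fs_apply0, fs_apply1,
      Nat.sub_self, if_pos rfl]
    simp only [Hber, PowerSeries.coeff_mk]
    have e1 : (((k+b).choose k : ℕ) : ℂ) * (k.factorial : ℂ) * (b.factorial : ℂ)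
        = ((k+b).factorial : ℂ) := by
      have h := Nat.choose_mul_factorial_mul_factorial (Nat.le_add_right k b)
      rw [Nat.add_sub_cancel_left] at h
      exact_mod_cast congrArg (fun n : ℕ => (n : ℂ)) h
    have e2 : ((l.choose b : ℕ) : ℂ) * (b.factorial : ℂ) * ((l-b).factorial : ℂ)
        = (l.factorial : ℂ) := by
      exact_mod_cast congrArg (fun n : ℕ => (n : ℂ))
        (Nat.choose_mul_factorial_mul_factorial hbl)
    have hf1 : ((k+b).factorial : ℂ) ≠ 0 := Nat.cast_ne_zero.mpr (Nat.factorial_ne_zero _)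
    have hf2 : ((l-b).factorial : ℂ) ≠ 0 := Nat.cast_ne_zero.mpr (Nat.factorial_ne_zero _)
    have hf3 : ((k).factorial : ℂ) ≠ 0 := Nat.cast_ne_zero.mpr (Nat.factorial_ne_zero _)
    have hf4 : ((b).factorial : ℂ) ≠ 0 := Nat.cast_ne_zero.mpr (Nat.factorial_ne_zero _)
    have hf5 : ((l).factorial : ℂ) ≠ 0 := Nat.cast_ne_zero.mpr (Nat.factorial_ne_zero _)
    have hd1 : ((k : ℂ) + (b : ℂ) + 1) ≠ 0 := by
      have h := Nat.cast_ne_zero (R := ℂ).mpr (by omega : k + b + 1 ≠ 0)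
      push_cast at h
      exact h
    have hd2 : ((l : ℂ) - (b : ℂ) + 1) ≠ 0 := by
      have h := Nat.cast_ne_zero (R := ℂ).mpr (by omega : l - b + 1 ≠ 0)
      push_cast [Nat.cast_sub hbl] at h
      exact h
    have hsc : (k.factorial : ℂ) * (l.factorial : ℂ) * (((k+b).choose k : ℕ) : ℂ)
        / (((k+b).factorial : ℂ) * ((l-b).factorial : ℂ)) = ((l.choose b : ℕ) : ℂ) := by
      rw [div_eq_iff (mul_ne_zero hf1 hf2)]
      linear_combination (-(k.factorial : ℂ) * (((k+b).choose k : ℕ) : ℂ)) * e2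
        + (((l.choose b : ℕ) : ℂ) * ((l-b).factorial : ℂ)) * e1
    push_cast [Nat.cast_sub hbl]
    linear_combination (((1 - (c:ℂ)^(k+b+1)) * (((bernoulli (k+b+1) : ℚ) : ℂ) / ((k:ℂ)+(b:ℂ)+1))
        * γ₁^(k+b)) * ((1 - (c:ℂ)^(l-b+1)) * (((bernoulli (l-b+1) : ℚ) : ℂ) / ((l:ℂ)-(b:ℂ)+1))
        * γ₂^(l-b))) * hsc
end
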